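/- For t > 0, ν > 0 and x ∈ ℝ, ∫₀ᵗ G_ν(s,x) ds = 2t·G_ν(t,x) − (|x|/ν)·Erfc(|x|/√(2νt)). -/

import Mathlib

noncomputable def heatKernel (ν t x : ℝ) : ℝ :=
  (1 / Real.sqrt (2 * Real.pi * ν * t)) * Real.exp (-(x ^ 2) / (2 * ν * t))

noncomputable def Erfc (x : ℝ) : ℝ :=
  (2 / Real.sqrt Real.pi) * ∫ u in Set.Ioi x, Real.exp (-u ^ 2)

open MeasureTheory Set Filter Topology intervalIntegral

noncomputable def E (y : ℝ) : ℝ := ∫ u in Set.Ioi y, Real.exp (-u ^ 2)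

lemma integrable_E : MeasureTheory.Integrable (fun u : ℝ => Real.exp (-u ^ 2)) := by
  simpa using integrable_exp_neg_mul_sq (one_pos)

lemma E_repr (y : ℝ) : E y = E 0 - ∫ u in (0:ℝ)..y, Real.exp (-u ^ 2) := by
  have h := integrable_E
  have h1 := integral_Iic_add_Ioi (f := fun u : ℝ => Real.exp (-u ^ 2)) (b := y)
    h.integrableOn h.integrableOn
  have h2 := integral_Iic_add_Ioi (f := fun u : ℝ => Real.exp (-u ^ 2)) (b := 0)
    h.integrableOn h.integrableOn
  have h3 := integral_Iic_sub_Iic (f := fun u : ℝ => Real.exp (-u ^ 2)) (μ := volume)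
    (a := 0) (b := y) h.integrableOn h.integrableOn
  simp only [E]
  linarith

lemma hasDerivAt_E (y : ℝ) : HasDerivAt E (-Real.exp (-y ^ 2)) y := by
  have hc : Continuous (fun u : ℝ => Real.exp (-u ^ 2)) := by continuity
  have h : HasDerivAt (fun y => ∫ u in (0:ℝ)..y, Real.exp (-u ^ 2)) (Real.exp (-y ^ 2)) y :=
    intervalIntegral.integral_hasDerivAt_right (hc.intervalIntegrable _ _)
      (hc.stronglyMeasurableAtFilter _ _) hc.continuousAt
  have := (h.const_sub (E 0))
  refine HasDerivAt.congr_of_eventuallyEq ?_ (Filter.Eventually.of_forall E_repr)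
  simpa using this

lemma tendsto_E_atTop : Tendsto E atTop (𝓝 0) := by
  have h := intervalIntegral_tendsto_integral_Ioi (a := 0) (f := fun u : ℝ => Real.exp (-u ^ 2))
    (μ := volume) integrable_E.integrableOn tendsto_id
  have h2 : Tendsto (fun y => E 0 - ∫ u in (0:ℝ)..y, Real.exp (-u ^ 2)) atTop (𝓝 (E 0 - E 0)) :=
    tendsto_const_nhds.sub h
  simp only [← E_repr, sub_self] at h2
  exact h2


lemma hasDerivAt_F (ν x : ℝ) (hν : 0 < ν) {s : ℝ} (hs : 0 < s) :
    HasDerivAt (fun s => 2 * s * heatKernel ν s x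
        - (|x| / ν) * Erfc (|x| / Real.sqrt (2 * ν * s)))
      (heatKernel ν s x) s := by
  have h2νs : (0:ℝ) < 2 * ν * s := by positivity
  have ha0 : Real.sqrt (2 * ν * s) ≠ 0 := by positivity
  have hp0 : Real.sqrt Real.pi ≠ 0 := by positivity
  have hlin : HasDerivAt (fun s : ℝ => 2 * ν * s) (2 * ν) s := by
    simpa using (hasDerivAt_id s).const_mul (2 * ν)
  have hsqrt : HasDerivAt (fun s => Real.sqrt (2 * ν * s)) (ν / Real.sqrt (2 * ν * s)) s := by
    have h := (Real.hasDerivAt_sqrt h2νs.ne').comp s hlin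
    refine h.congr_deriv (Eq.symm ?_)
    field_simp
  -- inner function y(s) = |x| / sqrt (2νs)
  have hy : HasDerivAt (fun s => |x| / Real.sqrt (2 * ν * s))
      ((0 * Real.sqrt (2 * ν * s) - |x| * (ν / Real.sqrt (2 * ν * s)))
        / Real.sqrt (2 * ν * s) ^ 2) s :=
    (hasDerivAt_const s |x|).div hsqrt ha0
  have hEcomp := (hasDerivAt_E (|x| / Real.sqrt (2 * ν * s))).comp s hy
  -- 1 / (sqrt pi * sqrt (2νs))
  have hinv : HasDerivAt (fun s => (Real.sqrt Real.pi * Real.sqrt (2 * ν * s))⁻¹)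
      (-(Real.sqrt Real.pi * (ν / Real.sqrt (2 * ν * s)))
        / (Real.sqrt Real.pi * Real.sqrt (2 * ν * s)) ^ 2) s :=
    (hsqrt.const_mul (Real.sqrt Real.pi)).inv (by positivity)
  have harg : HasDerivAt (fun s => -(x ^ 2) / (2 * ν * s))
      ((0 * (2 * ν * s) - -(x ^ 2) * (2 * ν)) / (2 * ν * s) ^ 2) s :=
    (hasDerivAt_const s (-(x ^ 2))).div hlin h2νs.ne'
  have hexp := harg.exp
  have hK := hinv.mul hexp
  have hfirst := ((hasDerivAt_id s).const_mul 2).mul hK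
  have hsecond := (hEcomp.const_mul (2 / Real.sqrt Real.pi)).const_mul (|x| / ν)
  have H := hfirst.sub hsecond
  have habs : (|x| / Real.sqrt (2 * ν * s)) ^ 2 = x ^ 2 / (2 * ν * s) := by
    rw [div_pow, sq_abs, Real.sq_sqrt h2νs.le]
  simp only [heatKernel, Erfc, E, Function.comp,
    show ∀ u : ℝ, 2 * Real.pi * ν * u = Real.pi * (2 * ν * u) from fun u => by ring,
    Real.sqrt_mul Real.pi_pos.le, one_div] at H ⊢
  refine H.congr_deriv (Eq.symm ?_)
  simp only [Pi.mul_apply, id]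
  rw [habs]
  have ha2 : Real.sqrt (2 * ν * s) ^ 2 = 2 * ν * s := Real.sq_sqrt h2νs.le
  set a := Real.sqrt (2 * ν * s) with hadef
  set p := Real.sqrt Real.pi with hpdef
  rw [← ha2]
  field_simp
  ring_nf
  rw [sq_abs]
  linear_combination (ν * (2 * x ^ 2 - a ^ 2)) * ha2


lemma heatKernel_nonneg (ν s x : ℝ) : 0 ≤ heatKernel ν s x := by
  unfold heatKernel; positivity

lemma heatKernel_le (ν x : ℝ) (hν : 0 < ν) {s : ℝ} (hs : 0 < s) :
    heatKernel ν s x ≤ (Real.sqrt (2 * Real.pi * ν))⁻¹ * s ^ (-(1:ℝ)/2) := by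
  have h1 : Real.sqrt (2 * Real.pi * ν * s) = Real.sqrt (2 * Real.pi * ν) * Real.sqrt s := by
    rw [Real.sqrt_mul (by positivity)]
  have h2 : s ^ (-(1:ℝ)/2) = (Real.sqrt s)⁻¹ := by
    rw [Real.sqrt_eq_rpow, ← Real.rpow_neg hs.le]
    norm_num
  have hexp : Real.exp (-(x ^ 2) / (2 * ν * s)) ≤ 1 := by
    rw [Real.exp_le_one_iff, neg_div, neg_nonpos]
    positivity
  unfold heatKernel
  rw [h1, h2, one_div, mul_inv]
  exact mul_le_of_le_one_right (by positivity) hexp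

lemma intervalIntegrable_heatKernel (ν x : ℝ) (hν : 0 < ν) {t : ℝ} (ht : 0 < t) :
    IntervalIntegrable (fun s => heatKernel ν s x) volume 0 t := by
  rw [intervalIntegrable_iff_integrableOn_Ioc_of_le ht.le]
  have hg : IntegrableOn (fun s : ℝ => (Real.sqrt (2 * Real.pi * ν))⁻¹ * s ^ (-(1:ℝ)/2))
      (Ioc 0 t) volume := by
    have := (intervalIntegrable_rpow' (a := 0) (b := t) (r := -(1:ℝ)/2) (by norm_num))
    rw [intervalIntegrable_iff_integrableOn_Ioc_of_le ht.le] at this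
    exact this.const_mul _
  refine hg.mono' ?_ ?_
  · apply Measurable.aestronglyMeasurable
    unfold heatKernel
    fun_prop
  · filter_upwards [ae_restrict_mem measurableSet_Ioc] with s hs
    rw [Real.norm_eq_abs, abs_of_nonneg (heatKernel_nonneg ν s x)]
    exact heatKernel_le ν x hν hs.1

lemma tendsto_F_zero (ν x : ℝ) (hν : 0 < ν) :
    Tendsto (fun s => 2 * s * heatKernel ν s x
      - (|x| / ν) * Erfc (|x| / Real.sqrt (2 * ν * s))) (𝓝[>] (0:ℝ)) (𝓝 0) := by
  have hA : Tendsto (fun s => 2 * s * heatKernel ν s x) (𝓝[>] (0:ℝ)) (𝓝 0) := by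
    have hbound : Tendsto (fun s : ℝ => (2 / Real.sqrt (2 * Real.pi * ν)) * Real.sqrt s)
        (𝓝[>] (0:ℝ)) (𝓝 0) := by
      have : Tendsto (fun s : ℝ => (2 / Real.sqrt (2 * Real.pi * ν)) * Real.sqrt s)
          (𝓝 (0:ℝ)) (𝓝 ((2 / Real.sqrt (2 * Real.pi * ν)) * Real.sqrt 0)) :=
        (continuous_const.mul Real.continuous_sqrt).tendsto 0
      simpa using this.mono_left nhdsWithin_le_nhds
    refine tendsto_of_tendsto_of_tendsto_of_le_of_le' tendsto_const_nhds hbound ?_ ?_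
    · filter_upwards [self_mem_nhdsWithin] with s hs
      have hs' : (0:ℝ) < s := hs
      exact mul_nonneg (by positivity) (heatKernel_nonneg ν s x)
    · filter_upwards [self_mem_nhdsWithin] with s hs
      have hs' : (0:ℝ) < s := hs
      have h1 : Real.sqrt (2 * Real.pi * ν * s) = Real.sqrt (2 * Real.pi * ν) * Real.sqrt s := by
        rw [Real.sqrt_mul (by positivity)]
      have hexp : Real.exp (-(x ^ 2) / (2 * ν * s)) ≤ 1 := by
        rw [Real.exp_le_one_iff, neg_div, neg_nonpos]
        positivity
      unfold heatKernel
      calc 2 * s * (1 / Real.sqrt (2 * Real.pi * ν * s) * Real.exp (-(x ^ 2) / (2 * ν * s)))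
          ≤ 2 * s * (1 / Real.sqrt (2 * Real.pi * ν * s) * 1) := by
            apply mul_le_mul_of_nonneg_left _ (by positivity)
            apply mul_le_mul_of_nonneg_left hexp (by positivity)
        _ = (2 / Real.sqrt (2 * Real.pi * ν)) * (s / Real.sqrt s) := by
            rw [h1]; field_simp
        _ = (2 / Real.sqrt (2 * Real.pi * ν)) * Real.sqrt s := by rw [Real.div_sqrt]
  have hB : Tendsto (fun s => (|x| / ν) * Erfc (|x| / Real.sqrt (2 * ν * s)))
      (𝓝[>] (0:ℝ)) (𝓝 0) := by
    rcases eq_or_ne x 0 with hx | hx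
    · simpa [hx] using (tendsto_const_nhds :
        Tendsto (fun _ : ℝ => (0:ℝ)) (𝓝[>] (0:ℝ)) (𝓝 0))
    · have hx' : 0 < |x| := abs_pos.mpr hx
      have hsq : Tendsto (fun s : ℝ => Real.sqrt (2 * ν * s)) (𝓝[>] (0:ℝ)) (𝓝[>] (0:ℝ)) := by
        apply tendsto_nhdsWithin_of_tendsto_nhds_of_eventually_within
        · have : Tendsto (fun s : ℝ => Real.sqrt (2 * ν * s)) (𝓝 (0:ℝ))
              (𝓝 (Real.sqrt (2 * ν * 0))) :=
            (Real.continuous_sqrt.comp (by continuity)).tendsto 0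
          simpa using this.mono_left nhdsWithin_le_nhds
        · filter_upwards [self_mem_nhdsWithin] with s hs
          have : (0:ℝ) < s := hs
          have : (0:ℝ) < 2 * ν * s := by positivity
          simpa [Set.mem_Ioi] using Real.sqrt_pos.mpr this
      have hy : Tendsto (fun s : ℝ => |x| / Real.sqrt (2 * ν * s)) (𝓝[>] (0:ℝ)) atTop := by
        simp only [div_eq_mul_inv]
        exact Tendsto.const_mul_atTop hx' hsq.inv_tendsto_nhdsGT_zero
      have hEy : Tendsto (fun s : ℝ => E (|x| / Real.sqrt (2 * ν * s))) (𝓝[>] (0:ℝ)) (𝓝 0) :=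
        tendsto_E_atTop.comp hy
      have : Tendsto (fun s : ℝ => (|x| / ν) * ((2 / Real.sqrt Real.pi) *
          E (|x| / Real.sqrt (2 * ν * s)))) (𝓝[>] (0:ℝ)) (𝓝 ((|x| / ν) * ((2 / Real.sqrt Real.pi) * 0))) :=
        ((hEy.const_mul _).const_mul _)
      simp only [Erfc, E] at this ⊢
      simpa using this
  simpa using hA.sub hB

theorem stmt_10 (ν t x : ℝ) (hν : 0 < ν) (ht : 0 < t) :
    ∫ s in (0:ℝ)..t, heatKernel ν s x =
      2 * t * heatKernel ν t x - (|x| / ν) * Erfc (|x| / Real.sqrt (2 * ν * t)) := by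
  set f : ℝ → ℝ := fun s => heatKernel ν s x with hf
  set F : ℝ → ℝ := fun s => 2 * s * heatKernel ν s x
      - (|x| / ν) * Erfc (|x| / Real.sqrt (2 * ν * s)) with hF
  have hInt := intervalIntegrable_heatKernel ν x hν ht
  have hIocmem : Ioc (0:ℝ) t ∈ 𝓝[>] (0:ℝ) := Ioc_mem_nhdsGT_of_mem ⟨le_rfl, ht⟩
  have key : ∀ ε ∈ Ioc (0:ℝ) t, ∫ s in ε..t, f s = F t - F ε := by
    intro ε hε
    refine intervalIntegral.integral_eq_sub_of_hasDerivAt (fun u hu => ?_) ?_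
    · rw [Set.uIcc_of_le hε.2] at hu
      exact hasDerivAt_F ν x hν (lt_of_lt_of_le hε.1 hu.1)
    · exact hInt.mono_set (Set.uIcc_subset_uIcc (by simp [Set.mem_uIcc, hε.1.le, hε.2])
        (by simp [Set.mem_uIcc, ht.le]))
  have lim1 : Tendsto (fun ε => ∫ s in ε..t, f s) (𝓝[>] (0:ℝ))
      (𝓝 (∫ s in (0:ℝ)..t, f s)) := by
    have hIcc : IntegrableOn f (Icc 0 t) volume := by
      rw [integrableOn_Icc_iff_integrableOn_Ioc]
      exact (intervalIntegrable_iff_integrableOn_Ioc_of_le ht.le).mp hInt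
    have hcont := (intervalIntegral.continuousOn_primitive hIcc) 0 ⟨le_rfl, ht.le⟩
    have h0 : Tendsto (fun ε => ∫ s in Ioc (0:ℝ) ε, f s) (𝓝[>] (0:ℝ)) (𝓝 0) := by
      have := hcont.tendsto
      rw [show (∫ s in Ioc (0:ℝ) (0:ℝ), f s) = 0 by simp] at this
      exact this.mono_left (by
        rw [← nhdsWithin_Ioc_eq_nhdsGT ht]
        exact nhdsWithin_mono _ Ioc_subset_Icc_self)
    have heq : ∀ᶠ ε in 𝓝[>] (0:ℝ), (∫ s in (0:ℝ)..t, f s) - (∫ s in Ioc (0:ℝ) ε, f s)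
        = ∫ s in ε..t, f s := by
      filter_upwards [hIocmem] with ε hε
      have h1 : IntervalIntegrable f volume 0 ε := hInt.mono_set
        (Set.uIcc_subset_uIcc (by simp [Set.mem_uIcc]) (by simp [Set.mem_uIcc, hε.1.le, hε.2]))
      have h2 : IntervalIntegrable f volume ε t := hInt.mono_set
        (Set.uIcc_subset_uIcc (by simp [Set.mem_uIcc, hε.1.le, hε.2]) (by simp [Set.mem_uIcc, ht.le]))
      have := intervalIntegral.integral_add_adjacent_intervals h1 h2
      rw [← intervalIntegral.integral_of_le hε.1.le]
      linarith
    have := (tendsto_const_nhds.sub h0 : Tendsto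
      (fun ε => (∫ s in (0:ℝ)..t, f s) - (∫ s in Ioc (0:ℝ) ε, f s)) (𝓝[>] (0:ℝ))
      (𝓝 ((∫ s in (0:ℝ)..t, f s) - 0)))
    rw [sub_zero] at this
    exact this.congr' heq
  have lim2 : Tendsto (fun ε => F t - F ε) (𝓝[>] (0:ℝ)) (𝓝 (F t)) := by
    have h := Tendsto.const_sub (F t) (tendsto_F_zero ν x hν)
    simpa using h
  have : Tendsto (fun ε => ∫ s in ε..t, f s) (𝓝[>] (0:ℝ)) (𝓝 (F t)) := by
    refine lim2.congr' ?_
    filter_upwards [hIocmem] with ε hε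
    exact (key ε hε).symm
  exact tendsto_nhds_unique lim1 this
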